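/- Fix m ∈ ℕ, v_s ∈ ℝ and α ∈ (0,1). Let v_r be the unique real number with Φ̄(v_r) = α Φ̄(v_s), and set C := φ(v_s)/φ(v_r). Then there exists K > 0, depending only on α and v_s, with the following property: for all bounded measurable functions g, s : ℝ^m → ℝ, define h(θ) := E[g(U_θ)] where U_θ has law N(θ, I_m), define r := g + αC(s − g), and define the regions S := {(u,v) ∈ ℝ^m × ℝ : v > v_s − s(u)} and R := {(u,v) ∈ ℝ^m × ℝ : v > v_r − r(u)}. Then for every θ ∈ ℝ^m, with Y distributed N((θ, −h(θ)), I_{m+1}) (a parameter point on the boundary of the hypothesis region H = {(u,v) : v ≤ −h(u)}): |P(Y ∈ R) − α · P(Y ∈ S)| ≤ K (‖g‖_∞ + ‖s‖_∞)². In particular the selective rejection probability P(Y ∈ R)/P(Y ∈ S) equals α up to an error quadratic in the magnitude of the surfaces. -/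

import Mathlib

open MeasureTheory ProbabilityTheory Set
open scoped NNReal

/-- The standard normal density. -/
noncomputable def stdphi (t : ℝ) : ℝ :=
  (Real.sqrt (2 * Real.pi))⁻¹ * Real.exp (-t ^ 2 / 2)

/-- The standard normal upper-tail probability Φ̄. -/
noncomputable def Phibar (x : ℝ) : ℝ := ∫ t in Set.Ioi x, stdphi t

/-- The Gaussian measure `N(μ, σ² I_m)` on `ℝ^m` as a product of one-dimensional
Gaussian measures. -/
noncomputable def gaussianPi {m : ℕ} (μ : Fin m → ℝ) (v : ℝ≥0) :
    Measure (Fin m → ℝ) :=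
  Measure.pi fun i => gaussianReal (μ i) v


lemma stdphi_pos (t : ℝ) : 0 < stdphi t := by
  unfold stdphi; positivity

lemma integrable_stdphi : Integrable stdphi := by
  have h : Integrable (fun t : ℝ => Real.exp (-(1/2 : ℝ) * t ^ 2)) :=
    integrable_exp_neg_mul_sq (by norm_num)
  have h2 := h.const_mul (Real.sqrt (2 * Real.pi))⁻¹
  refine h2.congr (Filter.Eventually.of_forall fun t => ?_)
  unfold stdphi; ring_nf

lemma stdphi_hasDeriv (t : ℝ) :
    HasDerivAt stdphi ((Real.sqrt (2 * Real.pi))⁻¹ * (Real.exp (-t ^ 2 / 2) * (-t))) t := by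
  have h1 : HasDerivAt (fun t : ℝ => -t ^ 2 / 2) (-t) t := by
    have h := ((hasDerivAt_pow 2 t).neg).div_const 2
    refine h.congr_deriv ?_
    simp; ring
  have h2 := (h1.exp).const_mul (Real.sqrt (2 * Real.pi))⁻¹
  exact h2

lemma stdphi_deriv_bound (t : ℝ) :
    ‖(Real.sqrt (2 * Real.pi))⁻¹ * (Real.exp (-t ^ 2 / 2) * (-t))‖ ≤ 1 := by
  have h2pi : (2:ℝ) ≤ Real.sqrt (2 * Real.pi) := by
    nlinarith [Real.sq_sqrt (show (0:ℝ) ≤ 2*Real.pi by positivity),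
      Real.sqrt_nonneg (2*Real.pi), Real.pi_gt_three]
  have hinv : (Real.sqrt (2 * Real.pi))⁻¹ ≤ 1/2 := by
    rw [inv_le_comm₀ (by linarith) (by norm_num)]; linarith
  have hinv0 : (0:ℝ) ≤ (Real.sqrt (2 * Real.pi))⁻¹ := by positivity
  have key : |Real.exp (-t ^ 2 / 2) * (-t)| ≤ 2 := by
    rw [abs_mul, abs_neg, abs_of_pos (Real.exp_pos _)]
    rcases le_or_gt (|t|) 2 with h | h
    · have h1 : Real.exp (-t ^ 2 / 2) ≤ 1 := Real.exp_le_one_iff.mpr (by nlinarith [sq_nonneg t])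
      nlinarith [abs_nonneg t, Real.exp_pos (-t^2/2)]
    · have h1 : t ^ 2 / 2 ≤ Real.exp (t ^ 2 / 2) := by
        nlinarith [Real.add_one_le_exp (t^2/2)]
      have hee : Real.exp (-t ^ 2 / 2) * Real.exp (t ^ 2 / 2) = 1 := by
        rw [← Real.exp_add]; ring_nf; exact Real.exp_zero
      nlinarith [Real.exp_pos (-t^2/2), sq_abs t, abs_nonneg t]
  calc ‖(Real.sqrt (2 * Real.pi))⁻¹ * (Real.exp (-t ^ 2 / 2) * (-t))‖
      = (Real.sqrt (2 * Real.pi))⁻¹ * |Real.exp (-t ^ 2 / 2) * (-t)| := by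
        rw [norm_mul, Real.norm_eq_abs, Real.norm_eq_abs, abs_of_nonneg hinv0]
    _ ≤ (1/2) * 2 := mul_le_mul hinv key (abs_nonneg _) (by norm_num)
    _ = 1 := by norm_num

lemma stdphi_lip (x y : ℝ) : |stdphi x - stdphi y| ≤ |x - y| := by
  have := (convex_univ (𝕜 := ℝ) (E := ℝ)).norm_image_sub_le_of_norm_hasDerivWithin_le
    (f := stdphi) (f' := fun t => (Real.sqrt (2 * Real.pi))⁻¹ * (Real.exp (-t ^ 2 / 2) * (-t)))
    (C := 1) (fun t _ => (stdphi_hasDeriv t).hasDerivWithinAt)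
    (fun t _ => stdphi_deriv_bound t) (mem_univ y) (mem_univ x)
  simpa [Real.norm_eq_abs] using this


lemma Phibar_nonneg (x : ℝ) : 0 ≤ Phibar x :=
  setIntegral_nonneg measurableSet_Ioi fun t _ => (stdphi_pos t).le

lemma Phibar_anti : Antitone Phibar := by
  intro x y hxy
  exact setIntegral_mono_set integrable_stdphi.integrableOn
    (Filter.Eventually.of_forall fun t => (stdphi_pos t).le)
    (HasSubset.Subset.eventuallyLE (Ioi_subset_Ioi hxy))

lemma Phibar_meas : Measurable Phibar := Phibar_anti.measurable

lemma Phibar_le (x : ℝ) : Phibar x ≤ ∫ t, stdphi t :=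
  setIntegral_le_integral integrable_stdphi
    (Filter.Eventually.of_forall fun t => (stdphi_pos t).le)

lemma Phibar_sub {b a : ℝ} (h : b ≤ a) :
    Phibar b - Phibar a = ∫ t in Ioc b a, stdphi t := by
  have hu : Ioc b a ∪ Ioi a = Ioi b := Ioc_union_Ioi_eq_Ioi h
  have : Phibar b = (∫ t in Ioc b a, stdphi t) + ∫ t in Ioi a, stdphi t := by
    rw [← setIntegral_union (Ioc_disjoint_Ioi le_rfl) measurableSet_Ioi
      integrable_stdphi.integrableOn integrable_stdphi.integrableOn, hu]
    rfl
  rw [this]; unfold Phibar; ring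

lemma key_bound {b a e B : ℝ} (hba : b ≤ a) (hB : ∀ t ∈ Ioc b a, |stdphi t - stdphi e| ≤ B) :
    |Phibar b - Phibar a - (a - b) * stdphi e| ≤ B * (a - b) := by
  have hvol : volume (Ioc b a) = ENNReal.ofReal (a - b) := by
    rw [Real.volume_Ioc]
  have hconst : (a - b) * stdphi e = ∫ _ in Ioc b a, stdphi e := by
    rw [setIntegral_const, measureReal_def, hvol, ENNReal.toReal_ofReal (by linarith), smul_eq_mul]
  rw [Phibar_sub hba, hconst,
    ← integral_sub integrable_stdphi.integrableOn (integrableOn_const (by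
      rw [hvol]; exact ENNReal.ofReal_ne_top))]
  have := norm_setIntegral_le_of_norm_le_const (μ := volume)
    (f := fun t => stdphi t - stdphi e) (C := B) (s := Ioc b a)
    (by rw [hvol]; exact ENNReal.ofReal_lt_top)
    (fun t ht => by rw [Real.norm_eq_abs]; exact hB t ht)
  rw [Real.norm_eq_abs, measureReal_def, hvol, ENNReal.toReal_ofReal (by linarith)] at this
  exact this

lemma Phibar_taylor (a x : ℝ) :
    |Phibar (a - x) - Phibar a - x * stdphi a| ≤ x ^ 2 := by
  rcases le_or_gt 0 x with hx | hx
  · have h := key_bound (b := a - x) (a := a) (e := a) (B := x)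
      (by linarith) (fun t ht => by
        refine (stdphi_lip t a).trans ?_
        rw [abs_le]; constructor <;> [linarith [ht.1, ht.2]; linarith [ht.1, ht.2]])
    have : a - (a - x) = x := by ring
    rw [this] at h
    calc |Phibar (a - x) - Phibar a - x * stdphi a| ≤ x * x := h
      _ = x ^ 2 := by ring
  · have h := key_bound (b := a) (a := a - x) (e := a) (B := -x)
      (by linarith) (fun t ht => by
        refine (stdphi_lip t a).trans ?_
        rw [abs_le]; constructor <;> [linarith [ht.1, ht.2]; linarith [ht.1, ht.2]])
    have h2 : a - x - a = -x := by ring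
    rw [h2] at h
    have h3 : Phibar a - Phibar (a - x) - -x * stdphi a
        = -(Phibar (a - x) - Phibar a - x * stdphi a) := by ring
    rw [h3, abs_neg] at h
    calc |Phibar (a - x) - Phibar a - x * stdphi a| ≤ -x * -x := h
      _ = x ^ 2 := by ring


lemma gaussianPDFReal_std : gaussianPDFReal 0 1 = stdphi := by
  funext x
  simp only [gaussianPDFReal, stdphi, NNReal.coe_one, mul_one, sub_zero]

lemma gauss_tail (μ c : ℝ) :
    (gaussianReal μ 1) (Ioi c) = ENNReal.ofReal (Phibar (c - μ)) := by
  have h1 : (gaussianReal 0 1).map (· + μ) = gaussianReal μ 1 := by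
    rw [gaussianReal_map_add_const]; norm_num
  rw [← h1, Measure.map_apply (measurable_add_const μ) measurableSet_Ioi]
  have h2 : (· + μ) ⁻¹' Ioi c = Ioi (c - μ) := by
    ext t; simp [sub_lt_iff_lt_add]
  rw [h2, gaussianReal_apply_eq_integral 0 one_ne_zero, gaussianPDFReal_std]
  rfl

instance gaussianPi_prob {m : ℕ} (μ : Fin m → ℝ) (v : ℝ≥0) :
    IsProbabilityMeasure (gaussianPi μ v) := by
  unfold gaussianPi; infer_instance

lemma total_one : (∫ t, stdphi t) = 1 := by
  rw [← gaussianPDFReal_std]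
  exact integral_gaussianPDFReal_eq_one 0 one_ne_zero

lemma prod_eval {m : ℕ} (θ : Fin m → ℝ) (c : ℝ) (f : (Fin m → ℝ) → ℝ) (hf : Measurable f) :
    (((gaussianPi θ 1).prod (gaussianReal c 1)) {p : (Fin m → ℝ) × ℝ | f p.1 < p.2}).toReal
      = ∫ u, Phibar (f u - c) ∂(gaussianPi θ 1) := by
  have hset : MeasurableSet {p : (Fin m → ℝ) × ℝ | f p.1 < p.2} :=
    measurableSet_lt (hf.comp measurable_fst) measurable_snd
  rw [Measure.prod_apply hset]
  have h1 : ∀ u, (gaussianReal c 1) (Prod.mk u ⁻¹' {p : (Fin m → ℝ) × ℝ | f p.1 < p.2})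
      = ENNReal.ofReal (Phibar (f u - c)) := by
    intro u
    have : (Prod.mk u ⁻¹' {p : (Fin m → ℝ) × ℝ | f p.1 < p.2}) = Ioi (f u) := rfl
    rw [this, gauss_tail]
  simp_rw [h1]
  have hint : Integrable (fun u => Phibar (f u - c)) (gaussianPi θ 1) := by
    refine (integrable_const (1 : ℝ)).mono'
      ((Phibar_meas.comp (hf.sub_const c)).aestronglyMeasurable)
      (Filter.Eventually.of_forall fun u => ?_)
    rw [Real.norm_eq_abs, abs_of_nonneg (Phibar_nonneg _)]
    exact (Phibar_le _).trans total_one.le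
  rw [← ofReal_integral_eq_lintegral_ofReal hint
    (Filter.Eventually.of_forall fun u => Phibar_nonneg _),
    ENNReal.toReal_ofReal (integral_nonneg fun u => Phibar_nonneg _)]


lemma Phibar_le_one (x : ℝ) : Phibar x ≤ 1 := (Phibar_le x).trans total_one.le

lemma phibar_comp_integrable {X : Type*} [MeasurableSpace X] (μ : Measure X)
    [IsProbabilityMeasure μ] {f : X → ℝ} (hf : Measurable f) :
    Integrable (fun u => Phibar (f u)) μ := by
  refine (integrable_const (1 : ℝ)).mono'
    ((Phibar_meas.comp hf).aestronglyMeasurable)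
    (Filter.Eventually.of_forall fun u => ?_)
  rw [Real.norm_eq_abs, abs_of_nonneg (Phibar_nonneg _)]
  exact Phibar_le_one _

lemma bdd_integrable {X : Type*} [MeasurableSpace X] (μ : Measure X)
    [IsProbabilityMeasure μ] {f : X → ℝ} {M : ℝ} (hf : Measurable f)
    (hM : ∀ x, |f x| ≤ M) : Integrable f μ :=
  (integrable_const M).mono' hf.aestronglyMeasurable
    (Filter.Eventually.of_forall fun x => by rw [Real.norm_eq_abs]; exact hM x)


set_option maxHeartbeats 1000000 in
/-- Lemma 3 (unbiased selective rejection surface in the theory of nearly flat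
surfaces): with `Φ̄(v_r) = αΦ̄(v_s)`, `C = φ(v_s)/φ(v_r)`, `h = E₁ g` and the
rejection surface `r = g + αC(s − g)`, along the boundary of the hypothesis region
the rejection probability of `R` equals `α` times the selection probability of `S`
up to an error quadratic in `‖g‖_∞ + ‖s‖_∞`. -/
theorem stmt_10 (m : ℕ) (vs α : ℝ) (hα : α ∈ Set.Ioo (0 : ℝ) 1)
    (vr : ℝ) (hvr : Phibar vr = α * Phibar vs) :
    ∃ K : ℝ, 0 < K ∧
      ∀ g s : (Fin m → ℝ) → ℝ, Measurable g → Measurable s →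
        BddAbove (Set.range fun x => |g x|) →
        BddAbove (Set.range fun x => |s x|) →
        ∀ θ : Fin m → ℝ,
          |(((gaussianPi θ 1).prod
                (gaussianReal (-(∫ x, g x ∂(gaussianPi θ 1))) 1))
              {p : (Fin m → ℝ) × ℝ |
                vr - (g p.1 + α * (stdphi vs / stdphi vr) * (s p.1 - g p.1)) < p.2}).toReal
            - α * (((gaussianPi θ 1).prod
                (gaussianReal (-(∫ x, g x ∂(gaussianPi θ 1))) 1))
              {p : (Fin m → ℝ) × ℝ | vs - s p.1 < p.2}).toReal|
          ≤ K * ((⨆ x, |g x|) + ⨆ x, |s x|) ^ 2 := by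
  obtain ⟨hα0, hα1⟩ := hα
  set C : ℝ := stdphi vs / stdphi vr with hCdef
  have hC0 : 0 < C := div_pos (stdphi_pos vs) (stdphi_pos vr)
  refine ⟨(2 + 2 * C) ^ 2 + 1, by positivity, ?_⟩
  intro g s hg hs hbg hbs θ
  set μ := gaussianPi θ 1 with hμdef
  set h : ℝ := ∫ x, g x ∂μ with hhdef
  set Mg : ℝ := ⨆ x, |g x| with hMgdef
  set Ms : ℝ := ⨆ x, |s x| with hMsdef
  have hgle : ∀ x, |g x| ≤ Mg := fun x => le_ciSup hbg x
  have hsle : ∀ x, |s x| ≤ Ms := fun x => le_ciSup hbs x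
  have hMg0 : 0 ≤ Mg := (abs_nonneg _).trans (hgle 0)
  have hMs0 : 0 ≤ Ms := (abs_nonneg _).trans (hsle 0)
  have hgint : Integrable g μ := bdd_integrable μ hg hgle
  have hsint : Integrable s μ := bdd_integrable μ hs hsle
  have hhle : |h| ≤ Mg := by
    rw [hhdef]
    refine (norm_integral_le_integral_norm g).trans ?_
    calc ∫ x, ‖g x‖ ∂μ ≤ ∫ _, Mg ∂μ :=
          integral_mono hgint.abs (integrable_const Mg) fun x => hgle x
      _ = Mg := by simp
  -- the rejection surface
  set r : (Fin m → ℝ) → ℝ := fun u => g u + α * C * (s u - g u) with hrdef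
  have hrmeas : Measurable r := hg.add ((hs.sub hg).const_mul _)
  have hrint : Integrable r μ := hgint.add ((hsint.sub hgint).const_mul _)
  -- rewrite both probabilities via prod_eval
  have hL := prod_eval θ (-h) (fun u => vr - (g u + α * C * (s u - g u)))
    (measurable_const.sub hrmeas)
  have hS := prod_eval θ (-h) (fun u => vs - s u) (measurable_const.sub hs)
  rw [hL, hS]
  have e1 : (fun u => Phibar (vr - (g u + α * C * (s u - g u)) - -h))
      = fun u => Phibar (vr - (r u - h)) := by
    funext u; rw [hrdef]; ring_nf
  have e2 : (fun u => Phibar (vs - s u - -h)) = fun u => Phibar (vs - (s u - h)) := by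
    funext u; ring_nf
  rw [e1, e2]
  -- integral identities
  set Is : ℝ := ∫ x, s x ∂μ with hIsdef
  have hIsle : |Is| ≤ Ms := by
    rw [hIsdef]
    refine (norm_integral_le_integral_norm s).trans ?_
    calc ∫ x, ‖s x‖ ∂μ ≤ ∫ _, Ms ∂μ :=
          integral_mono hsint.abs (integrable_const Ms) fun x => hsle x
      _ = Ms := by simp
  have hIr : ∫ u, (r u - h) ∂μ = α * C * (Is - h) := by
    rw [integral_sub hrint (integrable_const h), integral_const]
    have hr2 : ∫ u, r u ∂μ = h + α * C * (Is - h) := by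
      calc ∫ u, r u ∂μ
          = (∫ u, g u ∂μ) + ∫ u, α * C * (s u - g u) ∂μ :=
            integral_add hgint ((hsint.sub hgint).const_mul (α * C))
        _ = (∫ u, g u ∂μ) + α * C * ∫ u, (s u - g u) ∂μ := by rw [integral_const_mul]
        _ = (∫ u, g u ∂μ) + α * C * ((∫ u, s u ∂μ) - ∫ u, g u ∂μ) := by
            rw [integral_sub hsint hgint]
        _ = h + α * C * (Is - h) := rfl
    rw [hr2]; simp
  have hIs : ∫ u, (s u - h) ∂μ = Is - h := by
    rw [integral_sub hsint (integrable_const h), integral_const, ← hIsdef]; simp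
  -- error terms
  set A : ℝ := 2 + 2 * C with hAdef
  have hA0 : 0 < A := by positivity
  have hxR : ∀ u, |r u - h| ≤ A * (Mg + Ms) := by
    intro u
    have e3 : |α * C * (s u - g u)| ≤ C * (Ms + Mg) := by
      rw [abs_mul, abs_of_nonneg (by positivity : (0:ℝ) ≤ α * C)]
      have h4 : |s u - g u| ≤ Ms + Mg := (abs_sub (s u) (g u)).trans
        (add_le_add (hsle u) (hgle u))
      nlinarith [mul_le_mul_of_nonneg_left h4 hC0.le,
        mul_nonneg (mul_nonneg (by linarith : (0:ℝ) ≤ 1 - α) hC0.le)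
          (abs_nonneg (s u - g u))]
    calc |r u - h| ≤ |r u| + |h| := abs_sub (r u) h
      _ ≤ (|g u| + |α * C * (s u - g u)|) + |h| := by
          exact add_le_add (abs_add_le _ _) le_rfl
      _ ≤ (Mg + C * (Ms + Mg)) + Mg := add_le_add (add_le_add (hgle u) e3) hhle
      _ ≤ A * (Mg + Ms) := by rw [hAdef]; nlinarith
  have hxS : ∀ u, |s u - h| ≤ Mg + Ms := fun u =>
    (abs_sub (s u) h).trans (by linarith [hsle u, hhle])
  set M : ℝ := Mg + Ms with hMdef
  have hM0 : 0 ≤ M := by positivity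
  -- Taylor expansions
  set eR : (Fin m → ℝ) → ℝ :=
    fun u => Phibar (vr - (r u - h)) - Phibar vr - (r u - h) * stdphi vr with heRdef
  set eS : (Fin m → ℝ) → ℝ :=
    fun u => Phibar (vs - (s u - h)) - Phibar vs - (s u - h) * stdphi vs with heSdef
  have heRb : ∀ u, |eR u| ≤ (A * M) ^ 2 := by
    intro u
    refine (Phibar_taylor vr (r u - h)).trans ?_
    have := hxR u
    nlinarith [abs_nonneg (r u - h), sq_abs (r u - h)]
  have heSb : ∀ u, |eS u| ≤ M ^ 2 := by
    intro u
    refine (Phibar_taylor vs (s u - h)).trans ?_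
    have := hxS u
    nlinarith [abs_nonneg (s u - h), sq_abs (s u - h)]
  have hPRint : Integrable (fun u => Phibar (vr - (r u - h))) μ :=
    phibar_comp_integrable μ (measurable_const.sub (hrmeas.sub measurable_const))
  have hPSint : Integrable (fun u => Phibar (vs - (s u - h))) μ :=
    phibar_comp_integrable μ (measurable_const.sub (hs.sub measurable_const))
  have hrhint : Integrable (fun u => r u - h) μ := hrint.sub (integrable_const h)
  have hshint : Integrable (fun u => s u - h) μ := hsint.sub (integrable_const h)
  have hPR : ∫ u, Phibar (vr - (r u - h)) ∂μ
      = Phibar vr + stdphi vr * (α * C * (Is - h)) + ∫ u, eR u ∂μ := by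
    have h1 : ∫ u, eR u ∂μ
        = (∫ u, Phibar (vr - (r u - h)) ∂μ) - Phibar vr - (α * C * (Is - h)) * stdphi vr := by
      calc ∫ u, eR u ∂μ
          = (∫ u, (Phibar (vr - (r u - h)) - Phibar vr) ∂μ)
              - ∫ u, (r u - h) * stdphi vr ∂μ :=
            integral_sub (hPRint.sub (integrable_const _)) (hrhint.mul_const _)
        _ = ((∫ u, Phibar (vr - (r u - h)) ∂μ) - ∫ _, Phibar vr ∂μ)
              - (∫ u, (r u - h) ∂μ) * stdphi vr := by
            rw [integral_sub hPRint (integrable_const _), integral_mul_const]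
        _ = (∫ u, Phibar (vr - (r u - h)) ∂μ) - Phibar vr
              - (α * C * (Is - h)) * stdphi vr := by
            rw [integral_const, hIr]; simp
    rw [h1]; ring
  have hPS : ∫ u, Phibar (vs - (s u - h)) ∂μ
      = Phibar vs + stdphi vs * (Is - h) + ∫ u, eS u ∂μ := by
    have h1 : ∫ u, eS u ∂μ
        = (∫ u, Phibar (vs - (s u - h)) ∂μ) - Phibar vs - (Is - h) * stdphi vs := by
      calc ∫ u, eS u ∂μ
          = (∫ u, (Phibar (vs - (s u - h)) - Phibar vs) ∂μ)
              - ∫ u, (s u - h) * stdphi vs ∂μ :=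
            integral_sub (hPSint.sub (integrable_const _)) (hshint.mul_const _)
        _ = ((∫ u, Phibar (vs - (s u - h)) ∂μ) - ∫ _, Phibar vs ∂μ)
              - (∫ u, (s u - h) ∂μ) * stdphi vs := by
            rw [integral_sub hPSint (integrable_const _), integral_mul_const]
        _ = (∫ u, Phibar (vs - (s u - h)) ∂μ) - Phibar vs - (Is - h) * stdphi vs := by
            rw [integral_const, hIs]; simp
    rw [h1]; ring
  have hERb : |∫ u, eR u ∂μ| ≤ (A * M) ^ 2 := by
    have := norm_integral_le_of_norm_le_const (μ := μ) (f := eR) (C := (A * M) ^ 2)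
      (Filter.Eventually.of_forall fun u => by rw [Real.norm_eq_abs]; exact heRb u)
    simpa using this
  have hESb : |∫ u, eS u ∂μ| ≤ M ^ 2 := by
    have := norm_integral_le_of_norm_le_const (μ := μ) (f := eS) (C := M ^ 2)
      (Filter.Eventually.of_forall fun u => by rw [Real.norm_eq_abs]; exact heSb u)
    simpa using this
  -- key cancellation
  have hkey : stdphi vr * (α * C * (Is - h)) = α * (stdphi vs * (Is - h)) := by
    rw [hCdef]
    field_simp [(stdphi_pos vr).ne']
  rw [hPR, hPS]
  have expand : Phibar vr + stdphi vr * (α * C * (Is - h)) + ∫ u, eR u ∂μ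
      - α * (Phibar vs + stdphi vs * (Is - h) + ∫ u, eS u ∂μ)
      = (∫ u, eR u ∂μ) - α * ∫ u, eS u ∂μ := by
    rw [hvr, hkey]; ring
  rw [expand]
  calc |(∫ u, eR u ∂μ) - α * ∫ u, eS u ∂μ| ≤ |∫ u, eR u ∂μ| + α * |∫ u, eS u ∂μ| := by
        rw [← abs_of_pos hα0, ← abs_mul, abs_of_pos hα0]
        exact abs_sub _ _
    _ ≤ (A * M) ^ 2 + 1 * M ^ 2 := by
        refine add_le_add hERb ?_
        have := mul_le_mul hα1.le hESb (abs_nonneg _) zero_le_one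
        linarith
    _ ≤ ((2 + 2 * C) ^ 2 + 1) * M ^ 2 := by rw [hAdef]; nlinarith [sq_nonneg M]
    _ = ((2 + 2 * C) ^ 2 + 1) * (Mg + Ms) ^ 2 := by rw [hMdef]
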